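/- Let N, J, K be positive integers with K ≤ min(N, J). Suppose Π, Π̃ ∈ R^{N×K} each have nonnegative entries with every row summing to 1, and each has, for every k ∈ {1,…,K}, at least one row equal to the k-th standard basis vector of R^K (a pure subject for every profile); suppose Θ, Θ̃ ∈ R^{J×K} each have rank K. If Π·Θᵀ = Π̃·Θ̃ᵀ, then there exists a K×K permutation matrix P such that Π̃ = Π·P and Θ̃ = Θ·P. -/

import Mathlib

open scoped BigOperators
open Matrix

/-- A matrix with `K` columns and rank `K` has injective `mulVec`. -/
lemma aux_mulVec_injective {J K : ℕ} (A : Matrix (Fin J) (Fin K) ℝ) (h : A.rank = K) :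
    Function.Injective A.mulVec := by
  have hcoe : A.mulVec = A.mulVecLin := rfl
  rw [hcoe, ← LinearMap.ker_eq_bot]
  have h1 := LinearMap.finrank_range_add_finrank_ker A.mulVecLin
  rw [Matrix.rank] at h
  rw [h] at h1
  have h2 : Module.finrank ℝ (Fin K → ℝ) = K := by simp
  rw [h2] at h1
  have h3 : Module.finrank ℝ (LinearMap.ker A.mulVecLin) = 0 := by omega
  exact Submodule.finrank_eq_zero.mp h3

theorem stmt0 (N J K : ℕ) (hK : 0 < K) (hKN : K ≤ N) (hKJ : K ≤ J)
    (Pm Pm' : Matrix (Fin N) (Fin K) ℝ) (Tm Tm' : Matrix (Fin J) (Fin K) ℝ)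
    (hPmpos : ∀ i k, 0 ≤ Pm i k) (hPmsum : ∀ i, ∑ k, Pm i k = 1)
    (hPm'pos : ∀ i k, 0 ≤ Pm' i k) (hPm'sum : ∀ i, ∑ k, Pm' i k = 1)
    (hpure : ∀ k : Fin K, ∃ i : Fin N, ∀ k' : Fin K, Pm i k' = if k' = k then 1 else 0)
    (hpure' : ∀ k : Fin K, ∃ i : Fin N, ∀ k' : Fin K, Pm' i k' = if k' = k then 1 else 0)
    (hTm : Tm.rank = K) (hTm' : Tm'.rank = K)
    (heq : Pm * Tmᵀ = Pm' * Tm'ᵀ) :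
    ∃ σp : Equiv.Perm (Fin K),
      Pm' = Pm * σp.permMatrix ℝ ∧ Tm' = Tm * σp.permMatrix ℝ := by
  classical
  have injT : Function.Injective Tm.mulVec := aux_mulVec_injective Tm hTm
  choose ip hip using hpure
  choose ip' hip' using hpure'
  set A : Matrix (Fin K) (Fin K) ℝ := Matrix.of fun k l => Pm (ip' k) l with hAdef
  set B : Matrix (Fin K) (Fin K) ℝ := Matrix.of fun k l => Pm' (ip k) l with hBdef
  have heqE : ∀ i j, ∑ l, Pm i l * Tm j l = ∑ l, Pm' i l * Tm' j l := by
    intro i j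
    have h := congrFun (congrFun heq i) j
    simpa [Matrix.mul_apply, Matrix.transpose_apply] using h
  -- Tm column k is a B-combination of Tm' columns
  have hTB : ∀ k j, Tm j k = ∑ l, B k l * Tm' j l := by
    intro k j
    have h := heqE (ip k) j
    have hL : ∑ l, Pm (ip k) l * Tm j l = Tm j k := by
      rw [Finset.sum_congr rfl fun l _ => by rw [hip k l]]
      simp
    rw [hL] at h
    exact h
  have hT'A : ∀ k j, Tm' j k = ∑ l, A k l * Tm j l := by
    intro k j
    have h := heqE (ip' k) j
    have hR : ∑ l, Pm' (ip' k) l * Tm' j l = Tm' j k := by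
      rw [Finset.sum_congr rfl fun l _ => by rw [hip' k l]]
      simp
    rw [hR] at h
    exact h.symm
  -- cancellation on the left by Tm
  have cancelL : ∀ M M' : Matrix (Fin K) (Fin K) ℝ, Tm * M = Tm * M' → M = M' := by
    intro M M' h
    funext k c
    have hc : Tm.mulVec (fun k => M k c) = Tm.mulVec (fun k => M' k c) := by
      funext j
      have h2 := congrFun (congrFun h j) c
      simpa [Matrix.mul_apply, Matrix.mulVec, dotProduct] using h2
    exact congrFun (injT hc) k
  have hBA : B * A = 1 := by
    rw [← Matrix.transpose_eq_one]
    apply cancelL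
    funext j k
    rw [Matrix.mul_one, Matrix.mul_apply]
    calc ∑ m, Tm j m * (B * A)ᵀ m k
        = ∑ m, ∑ l, B k l * (A l m * Tm j m) := by
          apply Finset.sum_congr rfl
          intro m _
          rw [Matrix.transpose_apply, Matrix.mul_apply, Finset.mul_sum]
          apply Finset.sum_congr rfl
          intro l _
          ring
      _ = ∑ l, ∑ m, B k l * (A l m * Tm j m) := Finset.sum_comm
      _ = ∑ l, B k l * Tm' j l := by
          apply Finset.sum_congr rfl
          intro l _
          rw [← Finset.mul_sum, ← hT'A l j]
      _ = Tm j k := (hTB k j).symm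
  have hArow : ∀ l, ∑ m, A l m = 1 := fun l => hPmsum (ip' l)
  have hBrow : ∀ k, ∑ l, B k l = 1 := fun k => hPm'sum (ip k)
  have hApos : ∀ l m, 0 ≤ A l m := fun l m => hPmpos _ _
  have hBpos : ∀ k l, 0 ≤ B k l := fun k l => hPm'pos _ _
  -- for each k there is a row of A equal to e_k
  have exists_row : ∀ k, ∃ l, ∀ m, A l m = if m = k then 1 else 0 := by
    intro k
    have hne : ∑ l, B k l ≠ 0 := by rw [hBrow k]; norm_num
    obtain ⟨l, -, hl⟩ := Finset.exists_ne_zero_of_sum_ne_zero hne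
    refine ⟨l, ?_⟩
    have hzero : ∀ m, m ≠ k → A l m = 0 := by
      intro m hm
      have hsum : ∑ l', B k l' * A l' m = 0 := by
        have h := congrFun (congrFun hBA k) m
        rw [Matrix.mul_apply] at h
        rw [h, Matrix.one_apply_ne (by exact fun hkm => hm hkm.symm)]
      have h0 := (Finset.sum_eq_zero_iff_of_nonneg
        (fun l' _ => mul_nonneg (hBpos k l') (hApos l' m))).mp hsum l (Finset.mem_univ l)
      rcases mul_eq_zero.mp h0 with h | h
      · exact absurd h hl
      · exact h
    intro m
    by_cases hm : m = k
    · subst hm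
      have hs := hArow l
      rw [Finset.sum_eq_single m (fun b _ hb => hzero b hb) (by simp)] at hs
      simp [hs]
    · simp [hm, hzero m hm]
  choose f hf using exists_row
  have hfinj : Function.Injective f := by
    intro k₁ k₂ h
    by_contra hne
    have h1 := hf k₁ k₁
    have h2 := hf k₂ k₁
    rw [h] at h1
    rw [h1] at h2
    simp [hne] at h2
  let σ : Equiv.Perm (Fin K) := Equiv.ofBijective f (Finite.injective_iff_bijective.mp hfinj)
  have hσ : ∀ k, σ k = f k := fun k => rfl
  have hAentry : ∀ l m, A l m = if σ.symm l = m then 1 else 0 := by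
    intro l m
    have h := hf (σ.symm l) m
    have hfl : f (σ.symm l) = l := by
      rw [← hσ]; exact σ.apply_symm_apply l
    rw [hfl] at h
    rw [h]
    by_cases hc : σ.symm l = m
    · simp [hc]
    · simp [hc, Ne.symm hc]
  have hAT : Aᵀ = σ.permMatrix ℝ := by
    funext l m
    rw [Matrix.transpose_apply, hAentry m l, Equiv.Perm.permMatrix,
      PEquiv.toMatrix_toPEquiv_apply, Pi.single_apply]
    simp only [eq_comm (a := m)]
    by_cases hc : σ l = m
    · simp [hc, (Equiv.symm_apply_eq σ).mpr hc.symm]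
    · have : σ.symm m ≠ l := fun h => hc (by rw [← h, σ.apply_symm_apply])
      simp [hc, this]
  have hAAT : A * Aᵀ = 1 := by
    funext l m
    rw [Matrix.mul_apply]
    have : ∀ c, A l c * Aᵀ c m = if σ.symm l = c then (if σ.symm m = c then 1 else 0) else 0 := by
      intro c
      rw [Matrix.transpose_apply, hAentry l c, hAentry m c]
      by_cases h1 : σ.symm l = c <;> simp [h1]
    rw [Finset.sum_congr rfl fun c _ => this c, Finset.sum_ite_eq]
    simp [Matrix.one_apply]
    by_cases h : l = m
    · simp [h]
    · simp [h, Ne.symm h]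
  have hT'eq : Tm' = Tm * Aᵀ := by
    funext j l
    rw [Matrix.mul_apply, hT'A l j]
    apply Finset.sum_congr rfl
    intro m _
    rw [Matrix.transpose_apply]; ring
  have hPA : Pm = Pm' * A := by
    have h2 : Pm * Tmᵀ = (Pm' * A) * Tmᵀ := by
      rw [heq, hT'eq, Matrix.transpose_mul, Matrix.transpose_transpose, Matrix.mul_assoc]
    funext i k
    have hrow : Tm.mulVec (fun k => Pm i k) = Tm.mulVec (fun k => (Pm' * A) i k) := by
      funext j
      have h3 := congrFun (congrFun h2 i) j
      simp only [Matrix.mul_apply, Matrix.transpose_apply] at h3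
      simp only [Matrix.mulVec, dotProduct]
      rw [Finset.sum_congr rfl fun l _ => mul_comm (Tm j l) (Pm i l),
        Finset.sum_congr rfl fun l _ => mul_comm (Tm j l) ((Pm' * A) i l)]
      exact h3
    exact congrFun (injT hrow) k
  refine ⟨σ, ?_, ?_⟩
  · rw [hPA, Matrix.mul_assoc, ← hAT, hAAT, Matrix.mul_one]
  · rw [hT'eq, hAT]
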